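/- Let 3+φ(ℕ) := {n ∈ ℕ | ∃ x ≥ 1 with 3 + φ(x) = n} be the set of values of Euler's totient function shifted by 3. Then M(3+φ(ℕ)) = {4, 5, 7, 9, 11, 13, 21, 23, 31, 33, 61, 63, 81, 83}. -/

import Mathlib

/-- `Subseq x y` means the decimal digit string of `x` is a subsequence of that of `y`. -/
def Subseq (x y : ℕ) : Prop := (Nat.digits 10 x).Sublist (Nat.digits 10 y)

/-- The minimal set of `S`: elements of `S` containing no smaller element of `S`
as a subsequence of their decimal digits. -/
def minimalSet (S : Set ℕ) : Set ℕ := {s ∈ S | ¬ ∃ n ∈ S, n < s ∧ Subseq n s}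

namespace TotientAux

abbrev S' : Set ℕ := {n | ∃ x : ℕ, 1 ≤ x ∧ 3 + Nat.totient x = n}

lemma S'_elim {n : ℕ} (h : n ∈ S') : n = 4 ∨ (n % 2 = 1 ∧ 5 ≤ n) := by
  obtain ⟨x, hx, rfl⟩ := h
  rcases lt_or_ge x 3 with h3 | h3
  · interval_cases x
    · left; decide
    · left; decide
  · right
    have he := Nat.totient_even (show 2 < x by omega)
    have hp : 0 < Nat.totient x := Nat.totient_pos.2 (by omega)
    obtain ⟨k, hk⟩ := he
    omega

lemma mem4 : (4:ℕ) ∈ S' := ⟨1, by norm_num, by decide⟩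
lemma mem5 : (5:ℕ) ∈ S' := ⟨3, by norm_num, by decide⟩
lemma mem7 : (7:ℕ) ∈ S' := ⟨5, by norm_num, by decide⟩
lemma mem9 : (9:ℕ) ∈ S' := ⟨7, by norm_num, by decide⟩
lemma mem11 : (11:ℕ) ∈ S' := ⟨16, by norm_num, by decide⟩
lemma mem13 : (13:ℕ) ∈ S' := ⟨11, by norm_num, by decide⟩
lemma mem21 : (21:ℕ) ∈ S' := ⟨19, by norm_num, by decide⟩
lemma mem23 : (23:ℕ) ∈ S' := ⟨25, by norm_num, by decide⟩
lemma mem31 : (31:ℕ) ∈ S' := ⟨29, by norm_num, by decide⟩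
lemma mem33 : (33:ℕ) ∈ S' := ⟨31, by norm_num, by decide⟩
lemma mem61 : (61:ℕ) ∈ S' := ⟨59, by norm_num, by decide⟩
lemma mem63 : (63:ℕ) ∈ S' := ⟨61, by norm_num, by decide⟩
lemma mem81 : (81:ℕ) ∈ S' := ⟨79, by norm_num, by decide⟩
lemma mem83 : (83:ℕ) ∈ S' := ⟨123, by norm_num, by decide⟩

lemma not_small_mem {n : ℕ} (h : n = 0 ∨ n = 1 ∨ n = 2 ∨ n = 3 ∨ n = 6 ∨ n = 8) :
    n ∉ S' := by
  intro hm
  rcases S'_elim hm with rfl | ⟨h1, h2⟩ <;> omega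

lemma sublist_single {n e : ℕ} (h : (Nat.digits 10 n).Sublist [e]) :
    n = 0 ∨ n = e := by
  have hl : Nat.digits 10 n ∈ ([e] : List ℕ).sublists := List.mem_sublists.2 h
  have hs : ([e] : List ℕ).sublists = [[], [e]] := rfl
  rw [hs] at hl
  simp only [List.mem_cons, List.mem_singleton, List.not_mem_nil, or_false] at hl
  rcases hl with h' | h'
  · left; rw [← Nat.ofDigits_digits 10 n, h']; rfl
  · right; rw [← Nat.ofDigits_digits 10 n, h']; simp [Nat.ofDigits]

lemma sublist_pair {n a b : ℕ} (h : (Nat.digits 10 n).Sublist [b, a]) :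
    n = 0 ∨ n = b ∨ n = a ∨ n = b + 10 * a := by
  have hl : Nat.digits 10 n ∈ ([b, a] : List ℕ).sublists := List.mem_sublists.2 h
  have hs : ([b, a] : List ℕ).sublists = [[], [b], [a], [b, a]] := rfl
  rw [hs] at hl
  simp only [List.mem_cons, List.mem_singleton, List.not_mem_nil, or_false] at hl
  rcases hl with h' | h' | h' | h'
  · left; rw [← Nat.ofDigits_digits 10 n, h']; rfl
  · right; left; rw [← Nat.ofDigits_digits 10 n, h']; simp [Nat.ofDigits]
  · right; right; left; rw [← Nat.ofDigits_digits 10 n, h']; simp [Nat.ofDigits]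
  · right; right; right; rw [← Nat.ofDigits_digits 10 n, h']; simp [Nat.ofDigits]

/-- minimality for a one-digit element -/
lemma min1 {e : ℕ} (he : Nat.digits 10 e = [e]) :
    ¬ ∃ n ∈ S', n < e ∧ Subseq n e := by
  rintro ⟨n, hnS, hlt, hsub⟩
  unfold Subseq at hsub
  rw [he] at hsub
  rcases sublist_single hsub with rfl | rfl
  · exact not_small_mem (by tauto) hnS
  · omega

/-- minimality for a two-digit element with both digits in {0,1,2,3,6,8} -/
lemma min2 {e a b : ℕ} (he : Nat.digits 10 e = [b, a]) (hee : e = b + 10 * a)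
    (ha : a = 0 ∨ a = 1 ∨ a = 2 ∨ a = 3 ∨ a = 6 ∨ a = 8)
    (hb : b = 0 ∨ b = 1 ∨ b = 2 ∨ b = 3 ∨ b = 6 ∨ b = 8) :
    ¬ ∃ n ∈ S', n < e ∧ Subseq n e := by
  rintro ⟨n, hnS, hlt, hsub⟩
  unfold Subseq at hsub
  rw [he] at hsub
  rcases sublist_pair hsub with rfl | rfl | rfl | rfl
  · exact not_small_mem (by tauto) hnS
  · exact not_small_mem hb hnS
  · exact not_small_mem ha hnS
  · omega

end TotientAux

open TotientAux in
theorem minimalSet_three_add_totient_values :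
    minimalSet {n : ℕ | ∃ x : ℕ, 1 ≤ x ∧ 3 + Nat.totient x = n} =
      {4, 5, 7, 9, 11, 13, 21, 23, 31, 33, 61, 63, 81, 83} := by
  ext s
  simp only [minimalSet, Set.mem_setOf_eq, Set.mem_insert_iff, Set.mem_singleton_iff]
  constructor
  · rintro ⟨hs, hmin⟩
    rcases S'_elim hs with rfl | ⟨hodd, h5⟩
    · tauto
    by_cases h10 : s < 10
    · omega
    push_neg at h10
    have hs0 : s ≠ 0 := by omega
    have hdig_s : Nat.digits 10 s = s % 10 :: Nat.digits 10 (s / 10) :=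
      Nat.digits_def' (by norm_num) (by omega)
    by_cases hdig : ∃ d ∈ Nat.digits 10 s, d = 4 ∨ d = 5 ∨ d = 7 ∨ d = 9
    · exfalso
      obtain ⟨d, hdmem, hd⟩ := hdig
      apply hmin
      refine ⟨d, ?_, ?_, ?_⟩
      · rcases hd with rfl | rfl | rfl | rfl
        exacts [mem4, mem5, mem7, mem9]
      · have hd10 : d < 10 := Nat.digits_lt_base (by norm_num) hdmem
        omega
      · show (Nat.digits 10 d).Sublist _
        have hdd : Nat.digits 10 d = [d] := by
          rcases hd with rfl | rfl | rfl | rfl <;> norm_num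
        rw [hdd]
        exact List.singleton_sublist.2 hdmem
    push_neg at hdig
    have hb : s % 10 = 1 ∨ s % 10 = 3 := by
      have hmem : s % 10 ∈ Nat.digits 10 s := by
        rw [hdig_s]; exact List.mem_cons_self
      have := hdig _ hmem
      omega
    by_cases h100 : s < 100
    · -- two-digit case
      have hlt10 : s / 10 < 10 := by omega
      have hpos : 0 < s / 10 := by omega
      have hq : Nat.digits 10 (s / 10) = [s / 10] := by
        rw [Nat.digits_def' (show (1:ℕ) < 10 by norm_num) hpos,
          Nat.mod_eq_of_lt hlt10, Nat.div_eq_of_lt hlt10, Nat.digits_zero]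
      have hqmem : s / 10 ∈ Nat.digits 10 s := by
        rw [hdig_s, hq]; simp
      have := hdig _ hqmem
      omega
    · exfalso
      push_neg at h100
      have htne : Nat.digits 10 (s / 10) ≠ [] :=
        Nat.digits_ne_nil_iff_ne_zero.mpr (by omega)
      set a := (Nat.digits 10 (s / 10)).getLast htne with ha_def
      have ha0 : a ≠ 0 := Nat.getLast_digit_ne_zero 10 (by omega)
      have hamem' : a ∈ Nat.digits 10 (s / 10) := List.getLast_mem _
      have hamem : a ∈ Nat.digits 10 s := by
        rw [hdig_s]; exact List.mem_cons_of_mem _ hamem'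
      have ha9 : a < 10 := Nat.digits_lt_base (by norm_num) hamem
      have ha := hdig _ hamem
      clear_value a
      apply hmin
      refine ⟨10 * a + s % 10, ?_, by omega, ?_⟩
      · have ha' : a = 1 ∨ a = 2 ∨ a = 3 ∨ a = 6 ∨ a = 8 := by omega
        rcases ha' with rfl | rfl | rfl | rfl | rfl <;>
          rcases hb with hb | hb <;> rw [hb]
        exacts [mem11, mem13, mem21, mem23, mem31, mem33, mem61, mem63, mem81, mem83]
      · show (Nat.digits 10 (10 * a + s % 10)).Sublist _
        have hn : Nat.digits 10 (10 * a + s % 10) = [s % 10, a] := by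
          rw [Nat.digits_def' (show (1:ℕ) < 10 by norm_num) (by omega),
            show (10 * a + s % 10) % 10 = s % 10 by omega,
            show (10 * a + s % 10) / 10 = a by omega,
            Nat.digits_def' (show (1:ℕ) < 10 by norm_num) (by omega),
            Nat.mod_eq_of_lt ha9, Nat.div_eq_of_lt ha9, Nat.digits_zero]
        rw [hn, hdig_s]
        exact List.cons_sublist_cons.2 (List.singleton_sublist.2 hamem')
  · intro h
    rcases h with rfl | rfl | rfl | rfl | rfl | rfl | rfl | rfl | rfl | rfl | rfl | rfl | rfl | rfl
    · exact ⟨mem4, min1 (by norm_num)⟩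
    · exact ⟨mem5, min1 (by norm_num)⟩
    · exact ⟨mem7, min1 (by norm_num)⟩
    · exact ⟨mem9, min1 (by norm_num)⟩
    · exact ⟨mem11, min2 (a := 1) (b := 1) (by norm_num) (by norm_num) (by tauto) (by tauto)⟩
    · exact ⟨mem13, min2 (a := 1) (b := 3) (by norm_num) (by norm_num) (by tauto) (by tauto)⟩
    · exact ⟨mem21, min2 (a := 2) (b := 1) (by norm_num) (by norm_num) (by tauto) (by tauto)⟩
    · exact ⟨mem23, min2 (a := 2) (b := 3) (by norm_num) (by norm_num) (by tauto) (by tauto)⟩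
    · exact ⟨mem31, min2 (a := 3) (b := 1) (by norm_num) (by norm_num) (by tauto) (by tauto)⟩
    · exact ⟨mem33, min2 (a := 3) (b := 3) (by norm_num) (by norm_num) (by tauto) (by tauto)⟩
    · exact ⟨mem61, min2 (a := 6) (b := 1) (by norm_num) (by norm_num) (by tauto) (by tauto)⟩
    · exact ⟨mem63, min2 (a := 6) (b := 3) (by norm_num) (by norm_num) (by tauto) (by tauto)⟩
    · exact ⟨mem81, min2 (a := 8) (b := 1) (by norm_num) (by norm_num) (by tauto) (by tauto)⟩
    · exact ⟨mem83, min2 (a := 8) (b := 3) (by norm_num) (by norm_num) (by tauto) (by tauto)⟩
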